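/- arXiv:1812.08233 — 4 statements merged into one kernel-verified Lean document; each statement's English description precedes it below -/
import Mathlib

section
/- For every b ∈ ℝ^p, the worst-case shift-perturbed risk equals the causally regularized risk: sup over all square-integrable random vectors δ : Ω → ℝ^r with E[ε δᵀ] = 0 and γE[AAᵀ] − E[δδᵀ] positive semidefinite of E[(Y^{Mδ} − (X^{Mδ})ᵀ b)²] is equal to E[((Y − Xᵀb) − E[Y − Xᵀb | σ(A)])²] + γ · E[(E[Y − Xᵀb | σ(A)])²]; moreover the supremum is attained at δ = √γ · A. -/
open MeasureTheory ProbabilityTheory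

section Helpers

variable {α : Type*} {mα : MeasurableSpace α} {μ : Measure α}

private lemma memLp2_mul_integrable {f g : α → ℝ} (hf : MemLp f 2 μ) (hg : MemLp g 2 μ) :
    Integrable (fun x => f x * g x) μ := by
  rw [← memLp_one_iff_integrable]
  have h := hg.smul (φ := f) hf (p := 2) (q := 2) (r := 1)
  exact h

private lemma integral_sum_mul' {ι : Type*} (s : Finset ι) (c : ι → ℝ) (f : ι → α → ℝ)
    (g : α → ℝ) (hf : ∀ i ∈ s, MemLp (f i) 2 μ) (hg : MemLp g 2 μ) :
    ∫ x, (∑ i ∈ s, c i * f i x) * g x ∂μ = ∑ i ∈ s, c i * ∫ x, f i x * g x ∂μ := by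
  have key : ∀ x, (∑ i ∈ s, c i * f i x) * g x = ∑ i ∈ s, c i * (f i x * g x) := by
    intro x; rw [Finset.sum_mul]; exact Finset.sum_congr rfl fun i _ => by ring
  simp_rw [key]
  rw [integral_finset_sum s fun i hi => (memLp2_mul_integrable (hf i hi) hg).const_mul (c i)]
  exact Finset.sum_congr rfl fun i _ => integral_const_mul _ _

private lemma integral_mul_sum' {ι : Type*} (s : Finset ι) (c : ι → ℝ) (f : ι → α → ℝ)
    (g : α → ℝ) (hf : ∀ i ∈ s, MemLp (f i) 2 μ) (hg : MemLp g 2 μ) :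
    ∫ x, g x * (∑ i ∈ s, c i * f i x) ∂μ = ∑ i ∈ s, c i * ∫ x, g x * f i x ∂μ := by
  have key : ∀ x, g x * (∑ i ∈ s, c i * f i x) = (∑ i ∈ s, c i * f i x) * g x := fun x => by ring
  simp_rw [key]
  rw [integral_sum_mul' s c f g hf hg]
  exact Finset.sum_congr rfl fun i _ => by rw [show (fun x => f i x * g x) = fun x => g x * f i x
    from funext fun x => by ring]

private lemma integral_add_sq' {u v : α → ℝ} (hu : MemLp u 2 μ) (hv : MemLp v 2 μ) :
    ∫ x, (u x + v x) ^ 2 ∂μ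
      = ∫ x, u x ^ 2 ∂μ + 2 * ∫ x, u x * v x ∂μ + ∫ x, v x ^ 2 ∂μ := by
  have h1 : Integrable (fun x => u x ^ 2) μ := hu.integrable_sq
  have h2 : Integrable (fun x => 2 * (u x * v x)) μ :=
    (memLp2_mul_integrable hu hv).const_mul 2
  have h3 : Integrable (fun x => v x ^ 2) μ := hv.integrable_sq
  have key : ∀ x, (u x + v x) ^ 2 = u x ^ 2 + 2 * (u x * v x) + v x ^ 2 := fun x => by ring
  have h12 : Integrable (fun x => u x ^ 2 + 2 * (u x * v x)) μ := h1.add h2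
  simp_rw [key]
  rw [integral_add h12 h3, integral_add h1 h2, integral_const_mul]

end Helpers

/-- Anchor regression duality (Rothenhäusler et al., Th. 1): for every `b`, the worst-case risk
over shift perturbations `v = M δ` with `E[ε δᵀ] = 0` and `E[δ δᵀ] ⪯ γ E[A Aᵀ]` equals the
causally regularized risk, and the supremum is attained at `δ = √γ · A`. -/
theorem anchor_regression_worst_case_duality
    {Ω : Type*} [MeasureSpace Ω] [IsProbabilityMeasure (ℙ : Measure Ω)]
    (p q r : ℕ) (hp : 1 ≤ p) (hq : 1 ≤ q) (hr : 1 ≤ r)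
    (B : Matrix (Fin (p + 1 + q)) (Fin (p + 1 + q)) ℝ) (hB : IsUnit (1 - B))
    (M : Matrix (Fin (p + 1 + q)) (Fin r) ℝ)
    (A : Ω → Fin r → ℝ) (ε : Ω → Fin (p + 1 + q) → ℝ)
    (hAmeas : Measurable A) (hεmeas : Measurable ε)
    (hA2 : ∀ j, MemLp (fun ω => A ω j) 2 ℙ)
    (hε2 : ∀ i, MemLp (fun ω => ε ω i) 2 ℙ)
    (hAmean : ∀ j, ∫ ω, A ω j ∂ℙ = 0)
    (hεmean : ∀ i, ∫ ω, ε ω i ∂ℙ = 0)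
    (hIndep : IndepFun ε A ℙ)
    (hApd : (Matrix.of fun i j => ∫ ω, A ω i * A ω j ∂ℙ).PosDef)
    (γ : ℝ) (hγ : 0 ≤ γ) (b : Fin p → ℝ)
    -- residual `Y^v - (X^v)ᵀ b` of the shift-perturbed system `Z^v = (I-B)⁻¹ (ε + v)`
    (res : (Ω → Fin (p + 1 + q) → ℝ) → Ω → ℝ)
    (hres : ∀ v ω, res v ω =
      (1 - B)⁻¹.mulVec (ε ω + v ω) ⟨p, by omega⟩
        - ∑ i : Fin p, b i * (1 - B)⁻¹.mulVec (ε ω + v ω) (Fin.castLE (by omega) i))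
    -- conditional expectation `E[Y - Xᵀ b | σ(A)]` for the unperturbed system (`v = M A`)
    (g : Ω → ℝ)
    (hg : g = (ℙ : Measure Ω)[res (fun ω => M.mulVec (A ω)) |
        MeasurableSpace.comap A inferInstance])
    -- admissible shift-generating random vectors `δ`
    (admissible : (Ω → Fin r → ℝ) → Prop)
    (hadm : ∀ δ : Ω → Fin r → ℝ, admissible δ ↔
      ((∀ j, MemLp (fun ω => δ ω j) 2 ℙ) ∧
        (∀ i j, ∫ ω, ε ω i * δ ω j ∂ℙ = 0) ∧
        (γ • (Matrix.of fun i j => ∫ ω, A ω i * A ω j ∂ℙ)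
          - Matrix.of fun i j => ∫ ω, δ ω i * δ ω j ∂ℙ).PosSemidef)) :
    (∀ δ : Ω → Fin r → ℝ, admissible δ →
        ∫ ω, (res (fun ω' => M.mulVec (δ ω')) ω) ^ 2 ∂ℙ
          ≤ ∫ ω, (res (fun ω' => M.mulVec (A ω')) ω - g ω) ^ 2 ∂ℙ
              + γ * ∫ ω, (g ω) ^ 2 ∂ℙ) ∧
    admissible (fun ω j => Real.sqrt γ * A ω j) ∧
    ∫ ω, (res (fun ω' => M.mulVec (fun j => Real.sqrt γ * A ω' j)) ω) ^ 2 ∂ℙ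
      = ∫ ω, (res (fun ω' => M.mulVec (A ω')) ω - g ω) ^ 2 ∂ℙ
          + γ * ∫ ω, (g ω) ^ 2 ∂ℙ := by
  classical
  have hple : p < p + 1 + q := by omega
  have hcast : p ≤ p + 1 + q := by omega
  set K : Matrix (Fin (p + 1 + q)) (Fin (p + 1 + q)) ℝ := (1 - B)⁻¹ with hK
  set pidx : Fin (p + 1 + q) := ⟨p, hple⟩ with hpidx
  set c : Fin (p + 1 + q) → ℝ :=
    fun l => K pidx l - ∑ i : Fin p, b i * K (Fin.castLE hcast i) l with hc
  set w : Fin r → ℝ := fun j => ∑ l, c l * M l j with hw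
  set ee : Ω → ℝ := fun ω => ∑ l, c l * ε ω l with hee
  set hh : Ω → ℝ := fun ω => ∑ j, w j * A ω j with hhh
  set G : Matrix (Fin r) (Fin r) ℝ := Matrix.of fun i j => ∫ ω, A ω i * A ω j ∂ℙ with hG
  -- linear algebra: the residual is an affine function of the shift
  have lin : ∀ u : Fin (p + 1 + q) → ℝ,
      K.mulVec u pidx - ∑ i : Fin p, b i * K.mulVec u (Fin.castLE hcast i)
        = ∑ l, c l * u l := by
    intro u
    simp only [Matrix.mulVec, dotProduct]
    simp_rw [Finset.mul_sum]
    rw [Finset.sum_comm, ← Finset.sum_sub_distrib]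
    refine Finset.sum_congr rfl fun l _ => ?_
    simp only [hc]
    rw [sub_mul, Finset.sum_mul]
    congr 1
    exact Finset.sum_congr rfl fun i _ => by ring
  have res_eq : ∀ (x : Ω → Fin r → ℝ) (ω : Ω),
      res (fun ω' => M.mulVec (x ω')) ω = ee ω + ∑ j, w j * x ω j := by
    intro x ω
    rw [hres]
    have h1 := lin (ε ω + M.mulVec (x ω))
    rw [h1]
    simp only [Pi.add_apply, mul_add, Finset.sum_add_distrib]
    congr 1
    simp only [Matrix.mulVec, dotProduct, hw, Finset.mul_sum]
    rw [Finset.sum_comm]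
    refine Finset.sum_congr rfl fun j _ => ?_
    rw [Finset.sum_mul]
    exact Finset.sum_congr rfl fun l _ => by ring
  -- integrability
  have hee2 : MemLp ee 2 ℙ :=
    memLp_finset_sum _ fun l _ => (hε2 l).const_mul (c l)
  have hhh2 : MemLp hh 2 ℙ :=
    memLp_finset_sum _ fun j _ => (hA2 j).const_mul (w j)
  have hee_int : Integrable ee ℙ := hee2.integrable one_le_two
  have hhh_int : Integrable hh ℙ := hhh2.integrable one_le_two
  -- mean of ee is zero
  have hee_mean : ∫ ω, ee ω ∂ℙ = 0 := by
    simp only [hee]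
    rw [integral_finset_sum _ fun l _ => ((hε2 l).integrable one_le_two).const_mul (c l)]
    refine Finset.sum_eq_zero fun l _ => ?_
    rw [integral_const_mul, hεmean l, mul_zero]
  -- independence of coordinates
  have hεA : ∀ i j, ∫ ω, ε ω i * A ω j ∂ℙ = 0 := by
    intro i j
    have hind := hIndep.comp (measurable_pi_apply i) (measurable_pi_apply j)
    have h2 := hind.integral_fun_mul_eq_mul_integral (hε2 i).aestronglyMeasurable (hA2 j).aestronglyMeasurable
    simpa [Function.comp_def, hεmean i, hAmean j] using h2
  -- conditional expectation: g = hh a.e.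
  have hresMA : res (fun ω => M.mulVec (A ω)) = fun ω => ee ω + hh ω :=
    funext fun ω => res_eq A ω
  have hmA : MeasurableSpace.comap A inferInstance ≤ (inferInstance : MeasurableSpace Ω) :=
    hAmeas.comap_le
  haveI : IsFiniteMeasure ((ℙ : Measure Ω).trim hmA) := isFiniteMeasure_trim hmA
  have hghh : g =ᵐ[ℙ] hh := by
    rw [hg, hresMA]
    have hhsm : StronglyMeasurable[MeasurableSpace.comap A inferInstance] hh := by
      have hφ : Measurable fun y : Fin r → ℝ => ∑ j, w j * y j :=
        Finset.measurable_sum (f := fun j (y : Fin r → ℝ) => w j * y j) _ fun j _ => by fun_prop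
      exact (hφ.comp (Measurable.of_comap_le le_rfl)).stronglyMeasurable
    have heqadd := condExp_add (μ := (ℙ : Measure Ω))
      (m := MeasurableSpace.comap A inferInstance) hee_int hhh_int
    have heqh : (ℙ : Measure Ω)[hh | MeasurableSpace.comap A inferInstance] = hh :=
      condExp_of_stronglyMeasurable hmA hhsm hhh_int
    have heesm : StronglyMeasurable[MeasurableSpace.comap ε inferInstance] ee := by
      have hφ : Measurable fun y : Fin (p + 1 + q) → ℝ => ∑ l, c l * y l :=
        Finset.measurable_sum (f := fun l (y : Fin (p + 1 + q) → ℝ) => c l * y l) _ fun l _ => by fun_prop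
      exact (hφ.comp (Measurable.of_comap_le le_rfl)).stronglyMeasurable
    have heqe : (ℙ : Measure Ω)[ee | MeasurableSpace.comap A inferInstance]
        =ᵐ[ℙ] fun _ => ∫ x, ee x ∂ℙ :=
      condExp_indep_eq hεmeas.comap_le hmA heesm ((IndepFun_iff_Indep ε A ℙ).mp hIndep)
    filter_upwards [heqadd, heqe] with ω h1 h2
    show (ℙ[ee + hh|MeasurableSpace.comap A inferInstance]) ω = hh ω
    rw [h1, Pi.add_apply, h2, heqh, hee_mean, zero_add]
  -- rewrite the two RHS integrals
  have hRHS1 : ∫ ω, (res (fun ω' => M.mulVec (A ω')) ω - g ω) ^ 2 ∂ℙ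
      = ∫ ω, ee ω ^ 2 ∂ℙ := by
    refine integral_congr_ae ?_
    filter_upwards [hghh] with ω hω
    rw [hresMA, hω]
    ring
  have hRHS2 : ∫ ω, (g ω) ^ 2 ∂ℙ = ∫ ω, hh ω ^ 2 ∂ℙ := by
    refine integral_congr_ae ?_
    filter_upwards [hghh] with ω hω
    rw [hω]
  -- quadratic form identity
  have quad : ∀ (δ : Ω → Fin r → ℝ), (∀ j, MemLp (fun ω => δ ω j) 2 ℙ) →
      ∫ ω, (∑ j, w j * δ ω j) ^ 2 ∂ℙ
        = dotProduct w ((Matrix.of fun i j => ∫ ω, δ ω i * δ ω j ∂ℙ).mulVec w) := by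
    intro δ hδ2
    have hS : MemLp (fun ω => ∑ j, w j * δ ω j) 2 ℙ :=
      memLp_finset_sum _ fun j _ => (hδ2 j).const_mul (w j)
    have e1 : ∀ ω : Ω, (∑ j, w j * δ ω j) ^ 2 = (∑ j, w j * δ ω j) * (∑ j, w j * δ ω j) :=
      fun ω => by ring
    simp_rw [e1]
    rw [integral_sum_mul' _ w (fun j ω => δ ω j) _ (fun j _ => hδ2 j) hS]
    have e2 : ∀ j, ∫ ω, δ ω j * (∑ k, w k * δ ω k) ∂ℙ = ∑ k, w k * ∫ ω, δ ω j * δ ω k ∂ℙ :=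
      fun j => integral_mul_sum' _ w (fun k ω => δ ω k) _ (fun k _ => hδ2 k) (hδ2 j)
    simp_rw [e2]
    simp only [dotProduct, Matrix.mulVec, Matrix.of_apply]
    refine Finset.sum_congr rfl fun j _ => ?_
    congr 1
    exact Finset.sum_congr rfl fun k _ => by ring
  -- cross term vanishes
  have cross : ∀ (δ : Ω → Fin r → ℝ), (∀ j, MemLp (fun ω => δ ω j) 2 ℙ) →
      (∀ i j, ∫ ω, ε ω i * δ ω j ∂ℙ = 0) →
      ∫ ω, ee ω * (∑ j, w j * δ ω j) ∂ℙ = 0 := by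
    intro δ hδ2 hzero
    have hS : MemLp (fun ω => ∑ j, w j * δ ω j) 2 ℙ :=
      memLp_finset_sum _ fun j _ => (hδ2 j).const_mul (w j)
    simp only [hee]
    rw [integral_sum_mul' _ c (fun l ω => ε ω l) _ (fun l _ => hε2 l) hS]
    refine Finset.sum_eq_zero fun l _ => ?_
    rw [integral_mul_sum' _ w (fun j ω => δ ω j) _ (fun j _ => hδ2 j) (hε2 l)]
    rw [Finset.sum_eq_zero fun j _ => by rw [hzero l j, mul_zero], mul_zero]
  -- the quadratic form of h equals w ⬝ G w
  have hhquad : ∫ ω, hh ω ^ 2 ∂ℙ = dotProduct w (G.mulVec w) := by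
    simp only [hhh]
    exact quad A hA2
  refine ⟨?_, ?_, ?_⟩
  · -- part 1: the bound
    intro δ hδ
    rw [hadm] at hδ
    obtain ⟨hδ2, hδε, hδpsd⟩ := hδ
    have hSδ : MemLp (fun ω => ∑ j, w j * δ ω j) 2 ℙ :=
      memLp_finset_sum _ fun j _ => (hδ2 j).const_mul (w j)
    have h1 : ∫ ω, (res (fun ω' => M.mulVec (δ ω')) ω) ^ 2 ∂ℙ
        = ∫ ω, (ee ω + ∑ j, w j * δ ω j) ^ 2 ∂ℙ := by
      refine integral_congr_ae (Filter.Eventually.of_forall fun ω => ?_)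
      exact congrArg (· ^ 2) (res_eq δ ω)
    rw [h1, integral_add_sq' hee2 hSδ, cross δ hδ2 hδε, mul_zero, add_zero,
      quad δ hδ2, hRHS1, hRHS2, hhquad]
    have hps := hδpsd.dotProduct_mulVec_nonneg w
    have hstar : star w = w := funext fun i => by simp
    rw [hstar, Matrix.sub_mulVec, Matrix.smul_mulVec, dotProduct_sub,
      dotProduct_smul, smul_eq_mul] at hps
    linarith
  · -- part 2: admissibility of √γ • A
    rw [hadm]
    refine ⟨fun j => (hA2 j).const_mul _, fun i j => ?_, ?_⟩
    · have e3 : ∀ ω, ε ω i * (Real.sqrt γ * A ω j) = Real.sqrt γ * (ε ω i * A ω j) :=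
        fun ω => by ring
      simp_rw [e3]
      rw [integral_const_mul, hεA i j, mul_zero]
    · have hmat : (γ • G
          - Matrix.of fun i j => ∫ ω, (Real.sqrt γ * A ω i) * (Real.sqrt γ * A ω j) ∂ℙ)
          = (0 : Matrix (Fin r) (Fin r) ℝ) := by
        ext i j
        simp only [Matrix.sub_apply, Matrix.smul_apply, Matrix.of_apply, smul_eq_mul,
          Matrix.zero_apply, hG]
        have e4 : ∀ ω, (Real.sqrt γ * A ω i) * (Real.sqrt γ * A ω j)
            = γ * (A ω i * A ω j) := fun ω => by
          rw [show (Real.sqrt γ * A ω i) * (Real.sqrt γ * A ω j)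
              = (Real.sqrt γ * Real.sqrt γ) * (A ω i * A ω j) from by ring,
            Real.mul_self_sqrt hγ]
        simp_rw [e4]
        rw [integral_const_mul]
        ring
      rw [hmat]
      exact Matrix.PosSemidef.zero
  · -- part 3: the value at √γ • A
    have hδstar : ∀ ω, (∑ j, w j * (Real.sqrt γ * A ω j)) = Real.sqrt γ * hh ω := by
      intro ω
      simp only [hhh, Finset.mul_sum]
      exact Finset.sum_congr rfl fun j _ => by ring
    have h1 : ∫ ω, (res (fun ω' => M.mulVec (fun j => Real.sqrt γ * A ω' j)) ω) ^ 2 ∂ℙ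
        = ∫ ω, (ee ω + Real.sqrt γ * hh ω) ^ 2 ∂ℙ := by
      refine integral_congr_ae (Filter.Eventually.of_forall fun ω => ?_)
      have h2 := res_eq (fun ω' j => Real.sqrt γ * A ω' j) ω
      rw [hδstar ω] at h2
      exact congrArg (· ^ 2) h2
    have hcross0 : ∫ ω, ee ω * hh ω ∂ℙ = 0 := by
      have := cross A hA2 hεA
      simpa only [hhh] using this
    have hsq : ∀ ω, (Real.sqrt γ * hh ω) ^ 2 = γ * hh ω ^ 2 := fun ω => by
      rw [mul_pow, sq, Real.mul_self_sqrt hγ]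
    rw [h1, integral_add_sq' hee2 (hhh2.const_mul (Real.sqrt γ))]
    have hcross1 : ∫ ω, ee ω * (Real.sqrt γ * hh ω) ∂ℙ = 0 := by
      have e5 : ∀ ω, ee ω * (Real.sqrt γ * hh ω) = Real.sqrt γ * (ee ω * hh ω) :=
        fun ω => by ring
      simp_rw [e5]
      rw [integral_const_mul, hcross0, mul_zero]
    have hsqint : ∫ ω, (Real.sqrt γ * hh ω) ^ 2 ∂ℙ = γ * ∫ ω, hh ω ^ 2 ∂ℙ := by
      simp_rw [hsq]
      exact integral_const_mul _ _
    rw [hcross1, mul_zero, add_zero, hsqint, hRHS1, hRHS2]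
end

section
/- Invariant Causal Prediction controls false positive causal selections: ℙ({ω : Ŝ(ω) ⊆ S*}) ≥ 1 − α, where Ŝ(ω) is the intersection of all subsets S ⊆ {1,…,p} that are not rejected at ω (with Ŝ(ω) := ∅ if every subset is rejected at ω). -/
open MeasureTheory ProbabilityTheory
open scoped Classical

/-- Invariant Causal Prediction controls false positive causal selections: if the invariance test
for the true causal set `S*` is valid at level `α`, i.e. `ℙ(R_{S*}) ≤ α`, then the intersection
`Ŝ(ω)` of all non-rejected sets (defined as `∅` when every set is rejected) satisfies
`ℙ(Ŝ ⊆ S*) ≥ 1 - α`. -/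
theorem icp_false_positive_control
    {Ω : Type*} [MeasureSpace Ω] [IsProbabilityMeasure (ℙ : Measure Ω)]
    (p : ℕ) (hp : 1 ≤ p)
    (R : Finset (Fin p) → Set Ω) (hRmeas : ∀ S, MeasurableSet (R S))
    (Sstar : Finset (Fin p))
    (α : ℝ) (hα : α ∈ Set.Ioo (0 : ℝ) 1)
    (hvalid : (ℙ (R Sstar)).toReal ≤ α)
    (Shat : Ω → Set (Fin p))
    (hShat : ∀ ω, Shat ω =
      if ∀ S : Finset (Fin p), ω ∈ R S then (∅ : Set (Fin p))
      else ⋂ S ∈ {S : Finset (Fin p) | ω ∉ R S}, (S : Set (Fin p))) :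
    1 - α ≤ (ℙ {ω | Shat ω ⊆ (Sstar : Set (Fin p))}).toReal := by
  have hsub : (R Sstar)ᶜ ⊆ {ω | Shat ω ⊆ (Sstar : Set (Fin p))} := by
    intro ω hω
    have hω' : ω ∉ R Sstar := hω
    simp only [Set.mem_setOf_eq, hShat ω]
    rw [if_neg (by intro h; exact hω' (h Sstar))]
    exact Set.biInter_subset_of_mem (by exact hω')
  have hmono : ℙ ((R Sstar)ᶜ) ≤ ℙ {ω | Shat ω ⊆ (Sstar : Set (Fin p))} :=
    measure_mono hsub
  have hcompl : ℙ ((R Sstar)ᶜ) = 1 - ℙ (R Sstar) := by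
    rw [measure_compl (hRmeas Sstar) (measure_ne_top _ _), measure_univ]
  have hle1 : ℙ (R Sstar) ≤ 1 := prob_le_one
  have h1 : (ℙ ((R Sstar)ᶜ)).toReal = 1 - (ℙ (R Sstar)).toReal := by
    rw [hcompl, ENNReal.toReal_sub_of_le hle1 (by simp)]
    simp
  have h2 : (ℙ ((R Sstar)ᶜ)).toReal ≤ (ℙ {ω | Shat ω ⊆ (Sstar : Set (Fin p))}).toReal :=
    ENNReal.toReal_mono (measure_ne_top _ _) hmono
  linarith
end

section
/- Causal variables yield invariant conditional distributions across environments: for every environment e, the conditional distribution of Y^e given X^e is (for law(X^e)-almost every x) the pushforward of μ_ε under t ↦ f(x, t); in particular, this conditional distribution (as a Markov kernel from ℝ^p to ℝ) does not depend on e. -/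
open MeasureTheory ProbabilityTheory

/-- Causal variables yield invariant conditional distributions: if `Y^e = f(X^e, ε^e)` with
`ε^e` independent of `X^e` and all `ε^e` having the same law `με`, then for every environment
`e` the conditional distribution of `Y^e` given `X^e = x` is, for `law(X^e)`-a.e. `x`, the
pushforward of `με` under `t ↦ f (x, t)`; in particular this kernel does not depend on `e`. -/
theorem invariance_of_causal_conditional
    {Ω : Type*} [MeasureSpace Ω] [IsProbabilityMeasure (ℙ : Measure Ω)]
    {E : Type*} (p : ℕ)
    (X : E → Ω → (Fin p → ℝ)) (ε : E → Ω → ℝ)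
    (f : (Fin p → ℝ) × ℝ → ℝ) (hf : Measurable f)
    (με : Measure ℝ) [IsProbabilityMeasure με]
    (hXmeas : ∀ e, Measurable (X e)) (hεmeas : ∀ e, Measurable (ε e))
    (hIndep : ∀ e, IndepFun (X e) (ε e) ℙ)
    (hLaw : ∀ e, Measure.map (ε e) ℙ = με)
    (Y : E → Ω → ℝ) (hY : ∀ e ω, Y e ω = f (X e ω, ε e ω)) :
    ∀ e, ∀ᵐ x ∂(Measure.map (X e) ℙ),
      condDistrib (Y e) (X e) ℙ x = Measure.map (fun t => f (x, t)) με := by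
  intro e
  set κ : Kernel (Fin p → ℝ) ℝ :=
    Kernel.map (Kernel.id ×ₖ Kernel.const _ με) f with hκdef
  have hκmk : IsMarkovKernel κ := by
    rw [hκdef]
    exact Kernel.IsMarkovKernel.map _ hf
  have hκ_apply : ∀ x, κ x = Measure.map (fun t => f (x, t)) με := by
    intro x
    rw [hκdef, Kernel.map_apply _ hf, Kernel.prod_apply, Kernel.id_apply, Kernel.const_apply,
      Measure.dirac_prod, Measure.map_map hf measurable_prodMk_left]
    rfl
  have hYmeas : Measurable (Y e) := by
    have : Y e = f ∘ (fun ω => (X e ω, ε e ω)) := by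
      ext ω; simp [hY]
    rw [this]
    exact hf.comp ((hXmeas e).prodMk (hεmeas e))
  have hprod : Measure.map (fun ω => (X e ω, ε e ω)) ℙ
      = (Measure.map (X e) ℙ).prod με := by
    rw [← hLaw e]
    exact ((indepFun_iff_map_prod_eq_prod_map_map (hXmeas e).aemeasurable
      (hεmeas e).aemeasurable).mp (hIndep e))
  have hcomp : Measure.map (fun ω => (X e ω, Y e ω)) ℙ
      = Measure.map (X e) ℙ ⊗ₘ κ := by
    have h1 : (fun ω => (X e ω, Y e ω))
        = (fun q : (Fin p → ℝ) × ℝ => (q.1, f q)) ∘ (fun ω => (X e ω, ε e ω)) := by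
      ext ω <;> simp [hY]
    have hg : Measurable (fun q : (Fin p → ℝ) × ℝ => (q.1, f q)) :=
      measurable_fst.prodMk hf
    rw [h1, ← Measure.map_map hg ((hXmeas e).prodMk (hεmeas e)), hprod]
    ext s hs
    rw [Measure.map_apply hg hs, Measure.prod_apply (hg hs),
      Measure.compProd_apply hs]
    refine lintegral_congr fun x => ?_
    have hfx : Measurable (fun t => f (x, t)) := hf.comp measurable_prodMk_left
    rw [hκ_apply x, Measure.map_apply hfx (measurable_prodMk_left hs)]
    rfl
  have := condDistrib_ae_eq_of_measure_eq_compProd_of_measurable (μ := ℙ) (hXmeas e) hYmeas (κ := κ) hcomp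
  filter_upwards [this] with x hx
  rw [hx, hκ_apply x]
end

section
/- Under the stated Gaussian structure, the conditional mean squared error E[R² | 𝒢] has the same distribution as σ₁² + σ₂² W² where W is standard Gaussian; equivalently, the law of E[R² | 𝒢] is the pushforward of the standard Gaussian measure on ℝ under w ↦ σ₁² + σ₂² w². Consequently, for every α ∈ (0,1), the α-quantile of E[R² | 𝒢] equals σ₁² + σ₂² · q_α, where q_α is the α-quantile of the χ²₁ distribution (the law of W²). -/
open MeasureTheory ProbabilityTheory Filter

/-- The `α`-quantile of a real distribution `μ`: the generalized inverse of the cdf. -/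
noncomputable def lawQuantile (μ : MeasureTheory.Measure ℝ) (a : ℝ) : ℝ :=
  sInf {x : ℝ | a ≤ (μ (Set.Iic x)).toReal}

lemma lawQuantile_affine (μ : Measure ℝ) [IsProbabilityMeasure μ] {c k a : ℝ} (hk : 0 < k)
    (ha0 : 0 < a) (ha1 : a < 1) :
    lawQuantile (Measure.map (fun x => c + k * x) μ) a = c + k * lawQuantile μ a := by
  have hmeas : Measurable (fun x : ℝ => c + k * x) := by fun_prop
  set S : Set ℝ := {x | a ≤ (μ (Set.Iic x)).toReal} with hS
  have hcdf : ∀ x, cdf μ x = (μ (Set.Iic x)).toReal := fun x => by rw [cdf_eq_real, measureReal_def]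
  have hSne : S.Nonempty := by
    obtain ⟨x, hx⟩ := ((tendsto_cdf_atTop μ).eventually (eventually_ge_nhds ha1)).exists
    exact ⟨x, by simpa [hS, hcdf x] using hx⟩
  have hSbdd : BddBelow S := by
    obtain ⟨x₀, hx₀⟩ := ((tendsto_cdf_atBot μ).eventually (eventually_lt_nhds ha0)).exists
    refine ⟨x₀, fun x hx => ?_⟩
    by_contra hlt
    push_neg at hlt
    have h1 : a ≤ cdf μ x := by simpa [hS, hcdf x] using hx
    have h2 : cdf μ x ≤ cdf μ x₀ := monotone_cdf μ hlt.le
    linarith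
  have himg : {x : ℝ | a ≤ ((Measure.map (fun x => c + k * x) μ) (Set.Iic x)).toReal}
      = (fun x => c + k * x) '' S := by
    ext x
    rw [Set.mem_setOf_eq, Measure.map_apply hmeas measurableSet_Iic]
    have hpre : (fun y : ℝ => c + k * y) ⁻¹' Set.Iic x = Set.Iic ((x - c) / k) := by
      ext y
      simp only [Set.mem_preimage, Set.mem_Iic, le_div_iff₀ hk]
      constructor <;> intro h <;> nlinarith
    rw [hpre]
    constructor
    · intro h
      refine ⟨(x - c) / k, h, ?_⟩
      field_simp
      ring
    · rintro ⟨y, hy, rfl⟩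
      have hyy : (c + k * y - c) / k = y := by field_simp; ring
      rw [hyy]
      exact hy
  have hmono : Monotone (fun x : ℝ => c + k * x) := fun x y hxy => by dsimp; nlinarith
  unfold lawQuantile
  rw [himg]
  exact (Monotone.map_csInf_of_continuousAt
    ((continuous_const.add (continuous_const.mul continuous_id)).continuousAt)
    hmono hSne hSbdd).symm

lemma integrable_sq_gaussianReal {v : NNReal} (hv : v ≠ 0) :
    Integrable (fun x : ℝ => x ^ 2) (gaussianReal 0 v) := by
  rw [gaussianReal_of_var_ne_zero 0 hv]
  rw [integrable_withDensity_iff (measurable_gaussianPDF 0 v)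
    (Filter.Eventually.of_forall fun x => ENNReal.ofReal_lt_top)]
  have hvpos : (0 : ℝ) < (v : ℝ) := by positivity
  have hb : (0 : ℝ) < 1 / (2 * (v : ℝ)) := by positivity
  have : Integrable (fun x : ℝ =>
      (Real.sqrt (2 * Real.pi * v))⁻¹ * (x ^ (2 : ℝ) * Real.exp (-(1 / (2 * (v : ℝ))) * x ^ 2))) :=
    (integrable_rpow_mul_exp_neg_mul_sq hb (by norm_num : (-1 : ℝ) < 2)).const_mul _
  refine this.congr (Filter.Eventually.of_forall fun x => ?_)
  beta_reduce
  rw [gaussianPDF_def, ENNReal.toReal_ofReal (gaussianPDFReal_nonneg 0 v x), gaussianPDFReal_def]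
  have h2 : (x : ℝ) ^ (2 : ℝ) = x ^ 2 := by
    rw [show ((2 : ℝ) = ((2 : ℕ) : ℝ)) by norm_num, Real.rpow_natCast]
  rw [h2]
  have h3 : -(x - 0) ^ 2 / (2 * (v : ℝ)) = -(1 / (2 * (v : ℝ))) * x ^ 2 := by
    field_simp
    ring
  beta_reduce
  rw [h3]
  ring

lemma memℒp_two_of_gaussian_law {Ω : Type*} [m0 : MeasurableSpace Ω] (P : Measure Ω)
    [IsProbabilityMeasure P] {U : Ω → ℝ} (hUm : Measurable U) {v : NNReal} (hv : v ≠ 0)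
    (hlaw : Measure.map U P = gaussianReal 0 v) : MemLp U 2 P := by
  have h1 : MemLp (id : ℝ → ℝ) 2 (gaussianReal 0 v) := by
    rw [memLp_two_iff_integrable_sq aestronglyMeasurable_id]
    exact integrable_sq_gaussianReal hv
  rw [← hlaw] at h1
  have := (memLp_map_measure_iff aestronglyMeasurable_id hUm.aemeasurable).mp h1
  simpa using this

/-- In-sample quantile characterization of causal regularization: if `U = E[R | 𝒢]` is
`N(0, σ₂²)`-distributed, `R - U` is independent of `𝒢` with `E[(R - U)²] = σ₁²`, then
`E[R² | 𝒢]` has the law of `σ₁² + σ₂² W²` for `W` standard Gaussian, and for every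
`α ∈ (0,1)` its `α`-quantile equals `σ₁² + σ₂² · q_α` with `q_α` the `α`-quantile of `χ²₁`
(the law of `W²`). -/
theorem condexp_sq_law_and_quantile
    {Ω : Type*} [m0 : MeasurableSpace Ω] (P : Measure Ω) [IsProbabilityMeasure P]
    (𝒢 : {m : MeasurableSpace Ω // m ≤ m0})
    (R : Ω → ℝ) (hR2 : MemLp R 2 P)
    (U : Ω → ℝ) (hU : U = P[R | 𝒢.1])
    (σ₁ σ₂ : ℝ) (hσ₁ : 0 ≤ σ₁) (hσ₂ : 0 < σ₂)
    (hUlaw : Measure.map U P = gaussianReal 0 (Real.toNNReal (σ₂ ^ 2)))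
    (hIndep : @Indep Ω (MeasurableSpace.comap (fun ω => R ω - U ω) inferInstance) 𝒢.1 m0 P)
    (hVar : ∫ ω, (R ω - U ω) ^ 2 ∂P = σ₁ ^ 2) :
    Measure.map (P[fun ω => R ω ^ 2 | 𝒢.1]) P
        = Measure.map (fun w => σ₁ ^ 2 + σ₂ ^ 2 * w ^ 2) (gaussianReal 0 1) ∧
      ∀ a ∈ Set.Ioo (0 : ℝ) 1,
        lawQuantile (Measure.map (P[fun ω => R ω ^ 2 | 𝒢.1]) P) a
          = σ₁ ^ 2 + σ₂ ^ 2 * lawQuantile (Measure.map (fun w => w ^ 2) (gaussianReal 0 1)) a := by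
  have hm : 𝒢.1 ≤ m0 := 𝒢.2
  have hUsm : StronglyMeasurable[𝒢.1] U := hU ▸ stronglyMeasurable_condExp
  have hUm : Measurable U := (hUsm.mono hm).measurable
  have hv : (Real.toNNReal (σ₂ ^ 2)) ≠ 0 := by
    simp only [ne_eq, Real.toNNReal_eq_zero, not_le]
    positivity
  have hU2 : MemLp U 2 P := memℒp_two_of_gaussian_law P hUm hv hUlaw
  have hUint : Integrable U P := hU2.integrable one_le_two
  have hRint : Integrable R P := hR2.integrable one_le_two
  set R' := hR2.1.mk R with hR'def
  have hR'sm : StronglyMeasurable R' := hR2.1.stronglyMeasurable_mk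
  have hRR' : R =ᵐ[P] R' := hR2.1.ae_eq_mk
  set V' : Ω → ℝ := fun ω => R' ω - U ω with hV'def
  have hVV' : (fun ω => R ω - U ω) =ᵐ[P] V' := by
    filter_upwards [hRR'] with ω h
    simp [hV'def, h]
  have hV'm : Measurable V' := hR'sm.measurable.sub hUm
  -- transfer independence to V'
  have hIndepV' : @Indep Ω (MeasurableSpace.comap V' inferInstance) 𝒢.1 m0 P := by
    rw [Indep_iff] at hIndep ⊢
    intro t1 t2 ht1 ht2
    obtain ⟨s, hs, rfl⟩ := ht1
    have h1 : MeasurableSet[MeasurableSpace.comap (fun ω => R ω - U ω) inferInstance]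
        ((fun ω => R ω - U ω) ⁻¹' s) := ⟨s, hs, rfl⟩
    have hA : P (((fun ω => R ω - U ω) ⁻¹' s) ∩ t2) = P ((V' ⁻¹' s) ∩ t2) := by
      apply measure_congr
      rw [Filter.eventuallyEq_set]
      filter_upwards [hVV'] with ω h
      simp [Set.mem_inter_iff, Set.mem_preimage, h]
    have hB : P ((fun ω => R ω - U ω) ⁻¹' s) = P (V' ⁻¹' s) := by
      apply measure_congr
      rw [Filter.eventuallyEq_set]
      filter_upwards [hVV'] with ω h
      simp [Set.mem_preimage, h]
    rw [← hA, ← hB]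
    exact hIndep _ t2 h1 ht2
  have hsqmeas : Measurable (fun x : ℝ => x ^ 2) := by fun_prop
  have hIndepV'sq :
      @Indep Ω (MeasurableSpace.comap (fun ω => V' ω ^ 2) inferInstance) 𝒢.1 m0 P := by
    refine indep_of_indep_of_le_left hIndepV' ?_
    rw [show (fun ω => V' ω ^ 2) = (fun x : ℝ => x ^ 2) ∘ V' from rfl]
    calc MeasurableSpace.comap ((fun x : ℝ => x ^ 2) ∘ V') inferInstance
        = MeasurableSpace.comap V'
            (MeasurableSpace.comap (fun x : ℝ => x ^ 2) inferInstance) := by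
          first
          | exact MeasurableSpace.comap_comp
          | exact (MeasurableSpace.comap_comp _ _ _).symm
          | exact MeasurableSpace.comap_comp.symm
          | exact MeasurableSpace.comap_comp _ _ _
      _ ≤ MeasurableSpace.comap V' inferInstance :=
          MeasurableSpace.comap_mono hsqmeas.comap_le
  -- conditional expectations via independence
  have hV'smc : StronglyMeasurable[MeasurableSpace.comap V' inferInstance] V' :=
    (Measurable.of_comap_le le_rfl).stronglyMeasurable
  have hV'sqsmc :
      StronglyMeasurable[MeasurableSpace.comap (fun ω => V' ω ^ 2) inferInstance]
        (fun ω => V' ω ^ 2) :=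
    (Measurable.of_comap_le le_rfl).stronglyMeasurable
  have hcondV : P[V'|𝒢.1] =ᵐ[P] fun _ => ∫ ω, V' ω ∂P :=
    condExp_indep_eq hV'm.comap_le hm hV'smc hIndepV'
  have hcondV2 : P[fun ω => V' ω ^ 2|𝒢.1] =ᵐ[P] fun _ => ∫ ω, V' ω ^ 2 ∂P :=
    condExp_indep_eq (hsqmeas.comp hV'm).comap_le hm hV'sqsmc hIndepV'sq
  -- integrals
  have hIU : ∫ ω, U ω ∂P = ∫ ω, R ω ∂P := by rw [hU]; exact integral_condExp hm
  have hintV' : ∫ ω, V' ω ∂P = 0 := by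
    rw [← integral_congr_ae hVV', integral_sub hRint hUint, hIU, sub_self]
  have hintV'2 : ∫ ω, V' ω ^ 2 ∂P = σ₁ ^ 2 := by
    rw [← hVar]
    refine integral_congr_ae ?_
    filter_upwards [hVV'] with ω h
    rw [h]
  -- integrability facts
  have hV2 : MemLp (fun ω => R ω - U ω) 2 P := hR2.sub hU2
  have hV'2 : MemLp V' 2 P := hV2.ae_eq hVV'
  have hV'int : Integrable V' P := hV'2.integrable one_le_two
  have hV'sqint : Integrable (fun ω => V' ω ^ 2) P := hV'2.integrable_sq
  have hUsqint : Integrable (fun ω => U ω ^ 2) P := hU2.integrable_sq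
  have hUV'int : Integrable ((fun ω => 2 * U ω) * V') P := by
    have h2U : MemLp (fun ω => 2 * U ω) 2 P := hU2.const_mul 2
    have h : MemLp ((fun ω => 2 * U ω) • V') 1 P :=
      hV'2.smul h2U (hpqr := ⟨by simp [ENNReal.inv_two_add_inv_two]⟩)
    have h' : Integrable ((fun ω => 2 * U ω) • V') P := memLp_one_iff_integrable.mp h
    exact h'.congr (Filter.Eventually.of_forall fun ω => by
      simp [Pi.smul_apply', smul_eq_mul])
  -- the key conditional expectation identity
  have key : P[fun ω => R ω ^ 2|𝒢.1] =ᵐ[P] fun ω => σ₁ ^ 2 + U ω ^ 2 := by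
    have h0 : (fun ω => R ω ^ 2) =ᵐ[P]
        (fun ω => V' ω ^ 2) + ((fun ω => 2 * U ω) * V' + fun ω => U ω ^ 2) := by
      filter_upwards [hRR'] with ω hω
      simp only [Pi.add_apply, Pi.mul_apply, hV'def]
      rw [hω]
      ring
    have h1 := condExp_congr_ae (m := 𝒢.1) h0
    have h2 := condExp_add (m := 𝒢.1) hV'sqint (hUV'int.add hUsqint)
    have h3 := condExp_add (m := 𝒢.1) hUV'int hUsqint
    have h4 : P[(fun ω => 2 * U ω) * V'|𝒢.1] =ᵐ[P] (fun ω => 2 * U ω) * P[V'|𝒢.1] :=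
      condExp_mul_of_stronglyMeasurable_left (hUsm.const_mul 2) hUV'int hV'int
    have hUsq_sm : StronglyMeasurable[𝒢.1] (fun ω => U ω ^ 2) := by
      simp only [pow_two]; exact hUsm.mul hUsm
    have h5 : P[fun ω => U ω ^ 2|𝒢.1] =ᵐ[P] fun ω => U ω ^ 2 :=
      Filter.EventuallyEq.of_eq (condExp_of_stronglyMeasurable hm hUsq_sm hUsqint)
    refine h1.trans (h2.trans ?_)
    filter_upwards [hcondV2, h3, h4, h5, hcondV] with ω e2 e3 e4 e5 e1
    simp only [Pi.add_apply, Pi.mul_apply] at e2 e3 e4 e5 e1 ⊢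
    rw [e2, e3, e4, e5, e1, hintV', hintV'2]
    ring
  -- the gaussian scaling identity
  have hgauss : Measure.map (fun w => σ₂ * w) (gaussianReal 0 1)
      = gaussianReal 0 (Real.toNNReal (σ₂ ^ 2)) := by
    have h := gaussianReal_map_const_mul (μ := 0) (v := 1) σ₂
    rw [show (σ₂ * ·) = fun w => σ₂ * w from rfl] at h
    rw [h]
    congr 1
    · simp
    · ext
      simp [Real.coe_toNNReal _ (sq_nonneg σ₂)]
  have hmap : Measure.map (P[fun ω => R ω ^ 2 | 𝒢.1]) P
      = Measure.map (fun w => σ₁ ^ 2 + σ₂ ^ 2 * w ^ 2) (gaussianReal 0 1) := by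
    rw [Measure.map_congr key,
      show (fun ω => σ₁ ^ 2 + U ω ^ 2) = (fun u : ℝ => σ₁ ^ 2 + u ^ 2) ∘ U from rfl,
      ← Measure.map_map (by fun_prop) hUm, hUlaw, ← hgauss,
      Measure.map_map (by fun_prop) (by fun_prop)]
    congr 1
    funext w
    simp [Function.comp, mul_pow]
  refine ⟨hmap, ?_⟩
  intro a ha
  haveI : IsProbabilityMeasure (Measure.map (fun w : ℝ => w ^ 2) (gaussianReal 0 1)) :=
    Measure.isProbabilityMeasure_map (by fun_prop)
  rw [hmap,
    show (fun w : ℝ => σ₁ ^ 2 + σ₂ ^ 2 * w ^ 2)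
      = (fun x : ℝ => σ₁ ^ 2 + σ₂ ^ 2 * x) ∘ (fun w : ℝ => w ^ 2) from rfl,
    ← Measure.map_map (by fun_prop) (by fun_prop)]
  exact lawQuantile_affine _ (pow_pos hσ₂ 2) ha.1 ha.2
end
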